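/- Let X be a real normed space and 0 < s ≤ r < 1. Then the function f : X → ℝ defined by f(t) = ‖t‖^r satisfies f(λx + (1-λ)y) ≤ λ^s f(x) + (1-λ)^s f(y) for all x, y ∈ X and λ ∈ [0,1]. -/

import Mathlib

theorem s_convex_norm_rpow (X : Type*) [NormedAddCommGroup X] [NormedSpace ℝ X]
    (s r : ℝ) (hs : 0 < s) (hsr : s ≤ r) (hr : r < 1)
    (x y : X) (l : ℝ) (hl : l ∈ Set.Icc (0:ℝ) 1) :
    ‖l • x + (1 - l) • y‖ ^ r ≤ l ^ s * ‖x‖ ^ r + (1 - l) ^ s * ‖y‖ ^ r := by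
  obtain ⟨hl0, hl1⟩ := hl
  have hr0 : 0 < r := hs.trans_le hsr
  have hl1' : 0 ≤ 1 - l := by linarith
  have h1 : ‖l • x + (1 - l) • y‖ ≤ l * ‖x‖ + (1 - l) * ‖y‖ := by
    calc ‖l • x + (1 - l) • y‖ ≤ ‖l • x‖ + ‖(1 - l) • y‖ := norm_add_le _ _
    _ = l * ‖x‖ + (1 - l) * ‖y‖ := by
        rw [norm_smul, norm_smul, Real.norm_of_nonneg hl0, Real.norm_of_nonneg hl1']
  have h2 : ‖l • x + (1 - l) • y‖ ^ r ≤ (l * ‖x‖ + (1 - l) * ‖y‖) ^ r :=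
    Real.rpow_le_rpow (norm_nonneg _) h1 hr0.le
  have hax : (0:ℝ) ≤ l * ‖x‖ := mul_nonneg hl0 (norm_nonneg _)
  have hay : (0:ℝ) ≤ (1 - l) * ‖y‖ := mul_nonneg hl1' (norm_nonneg _)
  have h3 : (l * ‖x‖ + (1 - l) * ‖y‖) ^ r ≤ (l * ‖x‖) ^ r + ((1 - l) * ‖y‖) ^ r := by
    have := NNReal.rpow_add_le_add_rpow (⟨_, hax⟩ : NNReal) (⟨_, hay⟩ : NNReal) hr0.le hr.le
    have := (NNReal.coe_le_coe).2 this
    exact this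
  have h4 : (l * ‖x‖) ^ r = l ^ r * ‖x‖ ^ r := Real.mul_rpow hl0 (norm_nonneg _)
  have h5 : ((1 - l) * ‖y‖) ^ r = (1 - l) ^ r * ‖y‖ ^ r := Real.mul_rpow hl1' (norm_nonneg _)
  have h6 : l ^ r ≤ l ^ s := Real.rpow_le_rpow_of_exponent_ge' hl0 hl1 hs.le hsr
  have h7 : (1 - l) ^ r ≤ (1 - l) ^ s :=
    Real.rpow_le_rpow_of_exponent_ge' hl1' (by linarith) hs.le hsr
  calc ‖l • x + (1 - l) • y‖ ^ r ≤ (l * ‖x‖) ^ r + ((1 - l) * ‖y‖) ^ r := h2.trans h3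
  _ = l ^ r * ‖x‖ ^ r + (1 - l) ^ r * ‖y‖ ^ r := by rw [h4, h5]
  _ ≤ l ^ s * ‖x‖ ^ r + (1 - l) ^ s * ‖y‖ ^ r :=
      add_le_add (mul_le_mul_of_nonneg_right h6 (Real.rpow_nonneg (norm_nonneg _) _))
        (mul_le_mul_of_nonneg_right h7 (Real.rpow_nonneg (norm_nonneg _) _))
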